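/- Let G be a connected weighted graph on vertex set V with positive edge weights and m edges, and let S be a nonempty proper subset of V; let ∂S denote the set of edges of G with exactly one endpoint in S (which is nonempty since G is connected). Then min_{s∈S, t∉S} Reff_G(s,t) ≤ min_{e∈∂S} (1/w_e) ≤ m · min_{s∈S, t∉S} Reff_G(s,t). -/

import Mathlib

open Matrix Finset

theorem aux_quad (n : ℕ) (w : Fin n → Fin n → ℝ) (hsymm : ∀ u v, w u v = w v u)
    (L : Matrix (Fin n) (Fin n) ℝ)
    (hL : ∀ u v, L u v = if u = v then ∑ s ∈ univ.erase u, w u s else - w u v)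
    (x : Fin n → ℝ) :
    2 * (x ⬝ᵥ L.mulVec x) = ∑ u, ∑ v, w u v * (x u - x v)^2 := by
  have step1 : x ⬝ᵥ L.mulVec x = ∑ u, ∑ v, w u v * (x u * (x u - x v)) := by
    unfold dotProduct Matrix.mulVec
    refine Finset.sum_congr rfl fun u _ => ?_
    have hinner : (fun j => L u j) ⬝ᵥ x = ∑ v ∈ univ.erase u, w u v * (x u - x v) := by
      unfold dotProduct
      rw [← Finset.sum_erase_add _ _ (mem_univ u)]
      simp only [hL]
      simp only [if_true]
      have : ∑ v ∈ univ.erase u, (if u = v then ∑ s ∈ univ.erase u, w u s else - w u v) * x v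
          = ∑ v ∈ univ.erase u, (- w u v) * x v := by
        refine Finset.sum_congr rfl fun v hv => ?_
        rw [if_neg (Ne.symm (Finset.ne_of_mem_erase hv))]
      rw [this, Finset.sum_mul, ← Finset.sum_add_distrib]
      refine Finset.sum_congr rfl fun v _ => by ring
    rw [hinner, Finset.mul_sum]
    rw [← Finset.sum_erase_add _ (fun v => w u v * (x u * (x u - x v))) (mem_univ u)]
    simp only [sub_self, mul_zero, add_zero]
    refine Finset.sum_congr rfl fun v _ => by ring
  have step3 : ∑ u, ∑ v, w u v * (x v * (x v - x u))
      = ∑ u, ∑ v, w u v * (x u * (x u - x v)) := by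
    rw [Finset.sum_comm]
    refine Finset.sum_congr rfl fun u _ => Finset.sum_congr rfl fun v _ => by
      rw [hsymm v u]
  calc 2 * (x ⬝ᵥ L.mulVec x)
      = ∑ u, ∑ v, w u v * (x u * (x u - x v)) + ∑ u, ∑ v, w u v * (x v * (x v - x u)) := by
        rw [step1, step3]; ring
    _ = ∑ u, ∑ v, w u v * (x u - x v)^2 := by
        rw [← Finset.sum_add_distrib]
        refine Finset.sum_congr rfl fun u _ => ?_
        rw [← Finset.sum_add_distrib]
        refine Finset.sum_congr rfl fun v _ => by ring


theorem aux_dot (n:ℕ) (A : Matrix (Fin n) (Fin n) ℝ) (b v : Fin n → ℝ) :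
    (A.mulVec b) ⬝ᵥ v = b ⬝ᵥ (Aᵀ.mulVec v) := by
  rw [dotProduct_comm, Matrix.dotProduct_mulVec, ← Matrix.mulVec_transpose,
    dotProduct_comm]

theorem aux_Hsymm (n:ℕ) (L H : Matrix (Fin n) (Fin n) ℝ) (hLs : Lᵀ = L)
    (hH1 : L * H * L = L) (hH2 : H * L * H = H)
    (hH3 : (L * H)ᵀ = L * H) (hH4 : (H * L)ᵀ = H * L) : Hᵀ = H := by
  have hC1 : L * Hᵀ * L = L := by
    have : (L * H * L)ᵀ = Lᵀ := by rw [hH1]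
    rw [Matrix.transpose_mul, Matrix.transpose_mul, hLs] at this
    rw [← Matrix.mul_assoc] at this; rw [this]
  have hC2 : Hᵀ * L * Hᵀ = Hᵀ := by
    have : (H * L * H)ᵀ = Hᵀ := by rw [hH2]
    rw [Matrix.transpose_mul, Matrix.transpose_mul, hLs] at this
    rw [← Matrix.mul_assoc] at this; rw [this]
  have hC3 : L * Hᵀ = H * L := by
    have : (H * L)ᵀ = H * L := hH4
    rw [Matrix.transpose_mul, hLs] at this; rw [this]
  have hC4 : Hᵀ * L = L * H := by
    have : (L * H)ᵀ = L * H := hH3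
    rw [Matrix.transpose_mul, hLs] at this; rw [this]
  have hAB : L * H = L * Hᵀ := by
    calc L * H = Hᵀ * L := hC4.symm
    _ = Hᵀ * (L * H * L) := by rw [hH1]
    _ = (Hᵀ * L) * (H * L) := by simp only [Matrix.mul_assoc]
    _ = (L * H) * (H * L) := by rw [hC4]
    _ = (L * H) * (L * Hᵀ) := by rw [hC3]
    _ = (L * H * L) * Hᵀ := by simp only [Matrix.mul_assoc]
    _ = L * Hᵀ := by rw [hH1]
  have hBA : Hᵀ * L = H * L := by rw [hC4, hAB, hC3]
  calc Hᵀ = Hᵀ * L * Hᵀ := hC2.symm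
  _ = H * L * Hᵀ := by rw [hBA]
  _ = H * (L * Hᵀ) := by rw [Matrix.mul_assoc]
  _ = H * (L * H) := by rw [← hAB]
  _ = H * L * H := by rw [Matrix.mul_assoc]
  _ = H := hH2


theorem aux_walkconst (n:ℕ) (w : Fin n → Fin n → ℝ) (hsymm : ∀ u v, w u v = w v u)
    (x : Fin n → ℝ) (hloc : ∀ u v, 0 < w u v → x u = x v)
    {a b : Fin n} (p : (SimpleGraph.fromRel fun u v : Fin n => 0 < w u v).Walk a b) :
    x a = x b := by
  induction p with
  | nil => rfl
  | @cons u v c h p ih =>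
    rw [SimpleGraph.fromRel_adj] at h
    rcases h.2 with hw | hw
    · exact (hloc _ _ hw).trans ih
    · rw [hsymm v u] at hw
      exact (hloc _ _ hw).trans ih

theorem aux_cutedge (n:ℕ) (w : Fin n → Fin n → ℝ) (hsymm : ∀ u v, w u v = w v u)
    (hconn : (SimpleGraph.fromRel fun u v : Fin n => 0 < w u v).Connected)
    (S : Finset (Fin n)) (hS : S.Nonempty) (hSc : Sᶜ.Nonempty) :
    ((S ×ˢ Sᶜ).filter fun e : Fin n × Fin n => 0 < w e.1 e.2).Nonempty := by
  obtain ⟨s, hs⟩ := hS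
  obtain ⟨t, ht⟩ := hSc
  have ht' : t ∉ S := by simpa using ht
  obtain ⟨p⟩ := hconn s t
  clear ht
  induction p with
  | nil => exact absurd hs ht'
  | @cons u v c h p ih =>
    by_cases hv : v ∈ S
    · exact ih hv ht'
    · rw [SimpleGraph.fromRel_adj] at h
      have hw : 0 < w u v := by
        rcases h.2 with hw | hw
        · exact hw
        · rwa [hsymm] at hw
      refine ⟨(u, v), ?_⟩
      simp only [Finset.mem_filter, Finset.mem_product, Finset.mem_compl]
      exact ⟨⟨hs, hv⟩, hw⟩

theorem aux_cs (n:ℕ) (L : Matrix (Fin n) (Fin n) ℝ) (hLs : Lᵀ = L)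
    (hpsd : ∀ z : Fin n → ℝ, 0 ≤ z ⬝ᵥ L.mulVec z) (x y : Fin n → ℝ) :
    (x ⬝ᵥ L.mulVec y)^2 ≤ (x ⬝ᵥ L.mulVec x) * (y ⬝ᵥ L.mulVec y) := by
  have hsym' : ∀ a b : Fin n → ℝ, a ⬝ᵥ L.mulVec b = b ⬝ᵥ L.mulVec a := by
    intro a b
    rw [Matrix.dotProduct_mulVec, ← Matrix.mulVec_transpose, hLs, dotProduct_comm]
  have key : ∀ t : ℝ, 0 ≤ (y ⬝ᵥ L.mulVec y) * (t * t) + (2 * (x ⬝ᵥ L.mulVec y)) * t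
      + (x ⬝ᵥ L.mulVec x) := by
    intro t
    have h0 := hpsd (x + t • y)
    have e : (x + t • y) ⬝ᵥ L.mulVec (x + t • y)
        = (y ⬝ᵥ L.mulVec y) * (t * t) + (2 * (x ⬝ᵥ L.mulVec y)) * t + (x ⬝ᵥ L.mulVec x) := by
      rw [Matrix.mulVec_add, Matrix.mulVec_smul, dotProduct_add,
        add_dotProduct, add_dotProduct, dotProduct_smul,
        smul_dotProduct, smul_dotProduct, dotProduct_smul,
        hsym' y x]
      simp only [smul_eq_mul]
      ring
    rwa [e] at h0
  have hd := discrim_le_zero key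
  rw [discrim] at hd
  nlinarith [hd]


theorem aux_Lsymm (n:ℕ) (w : Fin n → Fin n → ℝ) (hsymm : ∀ u v, w u v = w v u)
    (L : Matrix (Fin n) (Fin n) ℝ)
    (hL : ∀ u v, L u v = if u = v then ∑ s ∈ univ.erase u, w u s else - w u v) :
    Lᵀ = L := by
  ext u v
  rw [Matrix.transpose_apply, hL, hL]
  by_cases h : u = v
  · subst h; simp
  · rw [if_neg (Ne.symm h), if_neg h, hsymm]

theorem aux_colsum (n:ℕ) (w : Fin n → Fin n → ℝ) (hsymm : ∀ u v, w u v = w v u)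
    (L : Matrix (Fin n) (Fin n) ℝ)
    (hL : ∀ u v, L u v = if u = v then ∑ s ∈ univ.erase u, w u s else - w u v)
    (v : Fin n) : ∑ u, L u v = 0 := by
  rw [← Finset.sum_erase_add _ _ (mem_univ v)]
  have h1 : ∑ u ∈ univ.erase v, L u v = ∑ u ∈ univ.erase v, (- w u v) := by
    refine Finset.sum_congr rfl fun u hu => ?_
    rw [hL, if_neg (Finset.ne_of_mem_erase hu)]
  have h2 : L v v = ∑ s ∈ univ.erase v, w v s := by rw [hL, if_pos rfl]
  rw [h1, h2, ← Finset.sum_add_distrib]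
  refine Finset.sum_eq_zero fun u _ => by rw [hsymm v u]; ring

theorem aux_kerconst (n:ℕ) (w : Fin n → Fin n → ℝ) (hsymm : ∀ u v, w u v = w v u)
    (hnonneg : ∀ u v, 0 ≤ w u v)
    (hconn : (SimpleGraph.fromRel fun u v : Fin n => 0 < w u v).Connected)
    (L : Matrix (Fin n) (Fin n) ℝ)
    (hL : ∀ u v, L u v = if u = v then ∑ s ∈ univ.erase u, w u s else - w u v)
    (x : Fin n → ℝ) (h0 : x ⬝ᵥ L.mulVec x = 0) (u v : Fin n) : x u = x v := by
  have hq := aux_quad n w hsymm L hL x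
  rw [h0, mul_zero] at hq
  have hnn : ∀ a ∈ (univ : Finset (Fin n)), 0 ≤ ∑ b, w a b * (x a - x b)^2 :=
    fun a _ => Finset.sum_nonneg fun b _ => mul_nonneg (hnonneg a b) (sq_nonneg _)
  have hz := (Finset.sum_eq_zero_iff_of_nonneg hnn).mp hq.symm
  have hloc : ∀ a b : Fin n, 0 < w a b → x a = x b := by
    intro a b hw
    have hza := hz a (mem_univ a)
    have hnn2 : ∀ c ∈ (univ : Finset (Fin n)), 0 ≤ w a c * (x a - x c)^2 :=
      fun c _ => mul_nonneg (hnonneg a c) (sq_nonneg _)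
    have := (Finset.sum_eq_zero_iff_of_nonneg hnn2).mp hza b (mem_univ b)
    have h2 : (x a - x b)^2 = 0 := by
      rcases mul_eq_zero.mp this with h | h
      · exact absurd h (ne_of_gt hw)
      · exact h
    have := pow_eq_zero_iff (n := 2) (by norm_num) |>.mp h2
    linarith [this]
  obtain ⟨p⟩ := hconn u v
  exact aux_walkconst n w hsymm x hloc p

theorem aux_proj (n:ℕ) (hn : 0 < n) (w : Fin n → Fin n → ℝ) (hsymm : ∀ u v, w u v = w v u)
    (hnonneg : ∀ u v, 0 ≤ w u v)
    (hconn : (SimpleGraph.fromRel fun u v : Fin n => 0 < w u v).Connected)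
    (L : Matrix (Fin n) (Fin n) ℝ)
    (hL : ∀ u v, L u v = if u = v then ∑ s ∈ univ.erase u, w u s else - w u v)
    (H : Matrix (Fin n) (Fin n) ℝ)
    (hH1 : L * H * L = L) (hHs : Hᵀ = H) (hcomm : L * H = H * L)
    (b : Fin n → ℝ) (hb : ∑ i, b i = 0) :
    (L * H).mulVec b = b := by
  set c : Fin n → ℝ := b - (L * H).mulVec b with hc
  have hLLH : L * (L * H) = L := by rw [hcomm, ← Matrix.mul_assoc, hH1]
  have hLc : L.mulVec c = 0 := by
    rw [hc, Matrix.mulVec_sub, Matrix.mulVec_mulVec, hLLH, sub_self]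
  have hq0 : c ⬝ᵥ L.mulVec c = 0 := by rw [hLc, dotProduct_zero]
  have hconst := aux_kerconst n w hsymm hnonneg hconn L hL c hq0
  have hsumLH : ∑ u, ((L * H).mulVec b) u = 0 := by
    have : ∀ u, ((L * H).mulVec b) u = ∑ v, (L * H) u v * b v := fun u => rfl
    simp only [this]
    rw [Finset.sum_comm]
    refine Finset.sum_eq_zero fun v _ => ?_
    rw [← Finset.sum_mul]
    have : ∑ u, (L * H) u v = 0 := by
      have : ∀ u, (L * H) u v = ∑ k, L u k * H k v := fun u => rfl
      simp only [this]
      rw [Finset.sum_comm]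
      refine Finset.sum_eq_zero fun k _ => ?_
      rw [← Finset.sum_mul, aux_colsum n w hsymm L hL k, zero_mul]
    rw [this, zero_mul]
  have hsumc : ∑ i, c i = 0 := by
    rw [hc]
    simp only [Pi.sub_apply]
    rw [Finset.sum_sub_distrib, hb, hsumLH, sub_zero]
  have hc0 : ∀ i, c i = 0 := by
    intro i
    have hconsteq : ∀ j, c j = c i := fun j => hconst j i
    have : ∑ j, c j = (n : ℝ) * c i := by
      rw [Finset.sum_congr rfl fun j _ => hconsteq j, Finset.sum_const, card_univ,
        Fintype.card_fin, nsmul_eq_mul]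
    rw [hsumc] at this
    have hn' : (0:ℝ) < (n:ℝ) := by exact_mod_cast hn
    nlinarith [this]
  funext i
  have h := hc0 i
  rw [hc] at h
  simp only [Pi.sub_apply] at h
  linarith [h]

theorem aux_pairbound (n : ℕ) (w : Fin n → Fin n → ℝ) (hsymm : ∀ u v, w u v = w v u)
    (hnonneg : ∀ u v, 0 ≤ w u v)
    (L : Matrix (Fin n) (Fin n) ℝ)
    (hL : ∀ u v, L u v = if u = v then ∑ s ∈ univ.erase u, w u s else - w u v)
    (s t : Fin n) (hst : s ≠ t) (z : Fin n → ℝ) :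
    w s t * (z s - z t)^2 ≤ z ⬝ᵥ L.mulVec z := by
  have hq := aux_quad n w hsymm L hL z
  set g : Fin n → ℝ := fun u => ∑ v, w u v * (z u - z v)^2 with hg
  have hgnn : ∀ u, 0 ≤ g u := fun u => Finset.sum_nonneg fun v _ =>
    mul_nonneg (hnonneg u v) (sq_nonneg _)
  have h1 : ∑ u ∈ ({s, t} : Finset (Fin n)), g u ≤ ∑ u, g u :=
    Finset.sum_le_sum_of_subset_of_nonneg (Finset.subset_univ _) fun u _ _ => hgnn u
  rw [Finset.sum_pair hst] at h1
  have h2 : w s t * (z s - z t)^2 ≤ g s :=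
    Finset.single_le_sum (f := fun v => w s v * (z s - z v)^2)
      (fun v _ => mul_nonneg (hnonneg s v) (sq_nonneg _)) (mem_univ t)
  have h3 : w t s * (z t - z s)^2 ≤ g t :=
    Finset.single_le_sum (f := fun v => w t v * (z t - z v)^2)
      (fun v _ => mul_nonneg (hnonneg t v) (sq_nonneg _)) (mem_univ s)
  rw [hsymm t s] at h3
  nlinarith [h1, h2, h3, hq]


theorem stmt_17 (n : ℕ) (hn : 2 ≤ n)
    (w : Fin n → Fin n → ℝ)
    (hsymm : ∀ u v, w u v = w v u)
    (hnonneg : ∀ u v, 0 ≤ w u v)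
    (hconn : (SimpleGraph.fromRel fun u v : Fin n => 0 < w u v).Connected)
    (L : Matrix (Fin n) (Fin n) ℝ)
    (hL : ∀ u v, L u v = if u = v then ∑ s ∈ univ.erase u, w u s else - w u v)
    (H : Matrix (Fin n) (Fin n) ℝ)
    (hH1 : L * H * L = L) (hH2 : H * L * H = H)
    (hH3 : (L * H)ᵀ = L * H) (hH4 : (H * L)ᵀ = H * L)
    (reff : Fin n → Fin n → ℝ)
    (hreff : ∀ s t : Fin n, reff s t =
      (fun i => (if i = s then (1:ℝ) else 0) - (if i = t then (1:ℝ) else 0)) ⬝ᵥ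
        H.mulVec (fun i => (if i = s then (1:ℝ) else 0) - (if i = t then (1:ℝ) else 0)))
    (m : ℕ)
    (hm : m = (univ.filter fun e : Fin n × Fin n => e.1 < e.2 ∧ 0 < w e.1 e.2).card)
    (S : Finset (Fin n)) (hS : S.Nonempty) (hSc : Sᶜ.Nonempty) :
    ∃ hcut : ((S ×ˢ Sᶜ).filter fun e : Fin n × Fin n => 0 < w e.1 e.2).Nonempty,
      (S ×ˢ Sᶜ).inf' (hS.product hSc) (fun st => reff st.1 st.2) ≤
        (((S ×ˢ Sᶜ).filter fun e : Fin n × Fin n => 0 < w e.1 e.2).inf' hcut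
          fun e => 1 / w e.1 e.2) ∧
      (((S ×ˢ Sᶜ).filter fun e : Fin n × Fin n => 0 < w e.1 e.2).inf' hcut
          fun e => 1 / w e.1 e.2) ≤
        (m : ℝ) * (S ×ˢ Sᶜ).inf' (hS.product hSc) (fun st => reff st.1 st.2) := by
  have hn0 : 0 < n := by omega
  have hLs := aux_Lsymm n w hsymm L hL
  have hHs := aux_Hsymm n L H hLs hH1 hH2 hH3 hH4
  have hcomm : L * H = H * L := by
    conv_lhs => rw [← hH3]
    rw [Matrix.transpose_mul, hHs, hLs]
  have hpsd : ∀ z : Fin n → ℝ, 0 ≤ z ⬝ᵥ L.mulVec z := by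
    intro z
    have hq := aux_quad n w hsymm L hL z
    have hnn : (0:ℝ) ≤ ∑ u, ∑ v, w u v * (z u - z v)^2 :=
      Finset.sum_nonneg fun u _ => Finset.sum_nonneg fun v _ =>
        mul_nonneg (hnonneg u v) (sq_nonneg _)
    linarith
  have hsym' : ∀ a b : Fin n → ℝ, a ⬝ᵥ L.mulVec b = b ⬝ᵥ L.mulVec a := by
    intro a b
    rw [Matrix.dotProduct_mulVec, ← Matrix.mulVec_transpose, hLs, dotProduct_comm]
  set bv : Fin n → Fin n → Fin n → ℝ :=
    fun s t i => (if i = s then (1:ℝ) else 0) - (if i = t then (1:ℝ) else 0) with hbv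
  have hbdot : ∀ s t : Fin n, ∀ z : Fin n → ℝ, bv s t ⬝ᵥ z = z s - z t := by
    intro s t z
    simp [hbv, dotProduct, sub_mul, ite_mul, one_mul, zero_mul,
      Finset.sum_sub_distrib, Finset.sum_ite_eq']
  have hbsum : ∀ s t : Fin n, ∑ i, bv s t i = 0 := by
    intro s t
    simp [hbv, Finset.sum_sub_distrib, Finset.sum_ite_eq']
  have hreff' : ∀ s t, reff s t = bv s t ⬝ᵥ H.mulVec (bv s t) := fun s t => hreff s t
  have hproj : ∀ s t : Fin n, (L * H).mulVec (bv s t) = bv s t := fun s t =>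
    aux_proj n hn0 w hsymm hnonneg hconn L hL H hH1 hHs hcomm _ (hbsum s t)
  have hxLx : ∀ s t : Fin n,
      (H.mulVec (bv s t)) ⬝ᵥ L.mulVec (H.mulVec (bv s t)) = reff s t := by
    intro s t
    rw [aux_dot, hHs, Matrix.mulVec_mulVec, Matrix.mulVec_mulVec, hH2, ← hreff']
  have hRnn : ∀ s t : Fin n, 0 ≤ reff s t := fun s t => by
    rw [← hxLx s t]; exact hpsd _
  have hedge : ∀ s t : Fin n, s ≠ t → 0 < w s t → reff s t ≤ 1 / w s t := by
    intro s t hst hw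
    have h1 : (H.mulVec (bv s t)) s - (H.mulVec (bv s t)) t = reff s t := by
      rw [← hbdot s t (H.mulVec (bv s t)), ← hreff']
    have h2 := aux_pairbound n w hsymm hnonneg L hL s t hst (H.mulVec (bv s t))
    rw [h1, hxLx s t] at h2
    have hR := hRnn s t
    rcases eq_or_lt_of_le hR with hR0 | hRpos
    · rw [← hR0]; positivity
    · rw [le_div_iff₀ hw]
      nlinarith [h2, hRpos, hw, mul_pos hw hRpos]
  have hne : ∀ p : Fin n × Fin n, p ∈ S ×ˢ Sᶜ → p.1 ≠ p.2 := by
    intro p hp h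
    obtain ⟨h1, h2⟩ := Finset.mem_product.mp hp
    exact (Finset.mem_compl.mp h2) (h ▸ h1)
  have hcut : ((S ×ˢ Sᶜ).filter fun e : Fin n × Fin n => 0 < w e.1 e.2).Nonempty :=
    aux_cutedge n w hsymm hconn S hS hSc
  refine ⟨hcut, ?_, ?_⟩
  · obtain ⟨e, heF, hceq⟩ := Finset.exists_mem_eq_inf' hcut
      (fun e : Fin n × Fin n => 1 / w e.1 e.2)
    rw [hceq]
    have heP : e ∈ S ×ˢ Sᶜ := (Finset.mem_filter.mp heF).1
    have hwe : 0 < w e.1 e.2 := (Finset.mem_filter.mp heF).2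
    exact le_trans (Finset.inf'_le _ heP) (hedge e.1 e.2 (hne e heP) hwe)
  · set y : Fin n → ℝ := fun i => if i ∈ S then 1 else 0 with hy
    set Wt : ℝ := ∑ p ∈ S ×ˢ Sᶜ, w p.1 p.2 with hW
    have hyLy : y ⬝ᵥ L.mulVec y = Wt := by
      have hq := aux_quad n w hsymm L hL y
      have e1 : ∑ u ∈ S, ∑ v, w u v * (y u - y v)^2 = ∑ u ∈ S, ∑ v ∈ Sᶜ, w u v := by
        refine Finset.sum_congr rfl fun u hu => ?_
        rw [← Finset.sum_add_sum_compl S (fun v => w u v * (y u - y v)^2)]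
        have z1 : ∑ v ∈ S, w u v * (y u - y v)^2 = 0 :=
          Finset.sum_eq_zero fun v hv => by simp [hy, hu, hv]
        have z2 : ∑ v ∈ Sᶜ, w u v * (y u - y v)^2 = ∑ v ∈ Sᶜ, w u v :=
          Finset.sum_congr rfl fun v hv => by
            have hv' : v ∉ S := Finset.mem_compl.mp hv
            simp [hy, hu, hv']
        rw [z1, z2, zero_add]
      have e2 : ∑ u ∈ Sᶜ, ∑ v, w u v * (y u - y v)^2 = ∑ u ∈ S, ∑ v ∈ Sᶜ, w u v := by
        have e2a : ∑ u ∈ Sᶜ, ∑ v, w u v * (y u - y v)^2 = ∑ u ∈ Sᶜ, ∑ v ∈ S, w u v := by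
          refine Finset.sum_congr rfl fun u hu => ?_
          have hu' : u ∉ S := Finset.mem_compl.mp hu
          rw [← Finset.sum_add_sum_compl S (fun v => w u v * (y u - y v)^2)]
          have z1 : ∑ v ∈ S, w u v * (y u - y v)^2 = ∑ v ∈ S, w u v :=
            Finset.sum_congr rfl fun v hv => by simp [hy, hu', hv]
          have z2 : ∑ v ∈ Sᶜ, w u v * (y u - y v)^2 = 0 :=
            Finset.sum_eq_zero fun v hv => by
              have hv' : v ∉ S := Finset.mem_compl.mp hv
              simp [hy, hu', hv']
          rw [z1, z2, add_zero]
        rw [e2a, Finset.sum_comm]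
        exact Finset.sum_congr rfl fun v _ => Finset.sum_congr rfl fun u _ => hsymm u v
      have hsplit : ∑ u, ∑ v, w u v * (y u - y v)^2 = 2 * Wt := by
        rw [← Finset.sum_add_sum_compl S (fun u => ∑ v, w u v * (y u - y v)^2), e1, e2,
          hW, Finset.sum_product]
        ring
      linarith [hq, hsplit]
    have hxy1 : ∀ p : Fin n × Fin n, p ∈ S ×ˢ Sᶜ →
        (H.mulVec (bv p.1 p.2)) ⬝ᵥ L.mulVec y = 1 := by
      intro p hp
      obtain ⟨hp1, hp2⟩ := Finset.mem_product.mp hp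
      have hp2' : p.2 ∉ S := Finset.mem_compl.mp hp2
      rw [hsym', Matrix.mulVec_mulVec, hproj, dotProduct_comm, hbdot]
      simp [hy, hp1, hp2']
    have hRW : ∀ p : Fin n × Fin n, p ∈ S ×ˢ Sᶜ → 1 ≤ reff p.1 p.2 * Wt := by
      intro p hp
      have hcs := aux_cs n L hLs hpsd (H.mulVec (bv p.1 p.2)) y
      rw [hxy1 p hp, hxLx, hyLy] at hcs
      simpa using hcs
    obtain ⟨e0, he0F, hce0⟩ := Finset.exists_mem_eq_inf' hcut
      (fun e : Fin n × Fin n => 1 / w e.1 e.2)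
    set cmin := ((S ×ˢ Sᶜ).filter fun e : Fin n × Fin n => 0 < w e.1 e.2).inf' hcut
      (fun e => 1 / w e.1 e.2) with hcmin
    have hcpos : 0 < cmin := by
      rw [hce0]
      exact div_pos one_pos (Finset.mem_filter.mp he0F).2
    have hwle : ∀ p ∈ (S ×ˢ Sᶜ).filter fun e : Fin n × Fin n => 0 < w e.1 e.2,
        w p.1 p.2 ≤ 1 / cmin := by
      intro p hp
      have hwp : 0 < w p.1 p.2 := (Finset.mem_filter.mp hp).2
      have hle : cmin ≤ 1 / w p.1 p.2 := Finset.inf'_le _ hp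
      rw [le_div_iff₀ hwp] at hle
      rw [le_div_iff₀ hcpos]
      linarith
    have hWle : Wt ≤ ((((S ×ˢ Sᶜ).filter fun e : Fin n × Fin n =>
        0 < w e.1 e.2).card : ℝ)) * (1 / cmin) := by
      have hsplit2 : Wt = ∑ p ∈ (S ×ˢ Sᶜ).filter
          (fun e : Fin n × Fin n => 0 < w e.1 e.2), w p.1 p.2 := by
        rw [hW, ← Finset.sum_filter_add_sum_filter_not (S ×ˢ Sᶜ)
          (fun e : Fin n × Fin n => 0 < w e.1 e.2) (fun p => w p.1 p.2)]
        have hz : ∑ p ∈ (S ×ˢ Sᶜ).filter (fun e : Fin n × Fin n => ¬ 0 < w e.1 e.2),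
            w p.1 p.2 = 0 :=
          Finset.sum_eq_zero fun p hp => le_antisymm
            (not_lt.mp (Finset.mem_filter.mp hp).2) (hnonneg _ _)
        rw [hz, add_zero]
      rw [hsplit2]
      calc ∑ p ∈ (S ×ˢ Sᶜ).filter (fun e : Fin n × Fin n => 0 < w e.1 e.2), w p.1 p.2
          ≤ ∑ _p ∈ (S ×ˢ Sᶜ).filter (fun e : Fin n × Fin n => 0 < w e.1 e.2), (1 / cmin) :=
            Finset.sum_le_sum hwle
        _ = _ := by rw [Finset.sum_const, nsmul_eq_mul]
    have hcard : ((S ×ˢ Sᶜ).filter fun e : Fin n × Fin n => 0 < w e.1 e.2).card ≤ m := by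
      rw [hm]
      refine Finset.card_le_card_of_injOn
        (fun e => if e.1 < e.2 then e else (e.2, e.1)) ?_ ?_
      · intro p hp
        dsimp only
        obtain ⟨hpP, hpw⟩ := Finset.mem_filter.mp hp
        have hne' : p.1 ≠ p.2 := hne p hpP
        by_cases hlt : p.1 < p.2
        · rw [if_pos hlt]
          simp only [Finset.mem_coe, Finset.mem_filter, Finset.mem_univ, true_and]
          exact ⟨hlt, hpw⟩
        · rw [if_neg hlt]
          simp only [Finset.mem_coe, Finset.mem_filter, Finset.mem_univ, true_and]
          exact ⟨lt_of_le_of_ne (not_lt.mp hlt) (Ne.symm hne'),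
            by rw [← hsymm]; exact hpw⟩
      · intro p hp q hq hpq
        dsimp only at hpq
        have hp' := Finset.mem_coe.mp hp
        have hq' := Finset.mem_coe.mp hq
        have hpS := Finset.mem_product.mp (Finset.mem_filter.mp hp').1
        have hqS := Finset.mem_product.mp (Finset.mem_filter.mp hq').1
        have hp2 : p.2 ∉ S := Finset.mem_compl.mp hpS.2
        have hq2 : q.2 ∉ S := Finset.mem_compl.mp hqS.2
        by_cases h1 : p.1 < p.2 <;> by_cases h2 : q.1 < q.2
        · rw [if_pos h1, if_pos h2] at hpq; exact hpq
        · rw [if_pos h1, if_neg h2] at hpq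
          have ha : p.1 = q.2 := congrArg Prod.fst hpq
          exact absurd (ha ▸ hpS.1) hq2
        · rw [if_neg h1, if_pos h2] at hpq
          have ha : p.2 = q.1 := congrArg Prod.fst hpq
          exact absurd hqS.1 (ha ▸ hp2)
        · rw [if_neg h1, if_neg h2] at hpq
          have ha : p.2 = q.2 := congrArg Prod.fst hpq
          have hb : p.1 = q.1 := congrArg Prod.snd hpq
          exact Prod.ext hb ha
    obtain ⟨p0, hp0, hre⟩ := Finset.exists_mem_eq_inf' (hS.product hSc)
      (fun st : Fin n × Fin n => reff st.1 st.2)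
    rw [hre]
    have hR := hRnn p0.1 p0.2
    have hrw := hRW p0 hp0
    have hmc : ((((S ×ˢ Sᶜ).filter fun e : Fin n × Fin n => 0 < w e.1 e.2).card : ℝ))
        ≤ (m : ℝ) := Nat.cast_le.mpr hcard
    have hW2 : Wt ≤ (m:ℝ) * (1/cmin) :=
      le_trans hWle (mul_le_mul_of_nonneg_right hmc (le_of_lt (one_div_pos.mpr hcpos)))
    have h1' : 1 ≤ reff p0.1 p0.2 * ((m:ℝ) * (1/cmin)) :=
      le_trans hrw (mul_le_mul_of_nonneg_left hW2 hR)
    have hfin : 1 * cmin ≤ (reff p0.1 p0.2 * ((m:ℝ) * (1/cmin))) * cmin :=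
      mul_le_mul_of_nonneg_right h1' hcpos.le
    have hid : (reff p0.1 p0.2 * ((m:ℝ) * (1/cmin))) * cmin = (m:ℝ) * reff p0.1 p0.2 := by
      field_simp
    rw [hid, one_mul] at hfin
    exact hfin
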